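/- Let R be a p-henselian commutative ring additively generated by its units. If p is odd then V^2 K_2(R) ⊆ p·K_2(R); in general V^3 K_2(R) ⊆ p·K_2(R); and if p = 2 and the Artin–Schreier map x ↦ x^2 + x is surjective on R/2R, then V^2 K_2(R) ⊆ 2·K_2(R). -/

import Mathlib

/-- A ring is additively generated by its units. -/
def AddGenByUnits (R : Type) [CommRing R] : Prop :=
  AddSubgroup.closure {x : R | IsUnit x} = ⊤
/-! ## `K₂` with Dennis–Stein and Steinberg symbols

Quillen's `K₂` is not available in Mathlib.  We axiomatise the structure actually used:
an abelian group equipped with Dennis–Stein symbols `⟨a,b⟩` (older sign convention) and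
Steinberg symbols `{a,b}` satisfying the relations (D1)–(D5), bilinearity and the
Steinberg relation. -/

structure DennisSteinK2 (R : Type) [CommRing R] where
  K2 : Type
  [grp : AddCommGroup K2]
  /-- the Dennis–Stein symbol `⟨a,b⟩` (meaningful when `1 + ab` is a unit) -/
  ds : R → R → K2
  /-- the Steinberg symbol `{a,b}` -/
  st : Rˣ → Rˣ → K2
  D1 : ∀ a b : R, IsUnit (1 + a * b) → ds a b = - ds (-b) (-a)
  D2 : ∀ a b c : R, IsUnit (1 + a * b) → IsUnit (1 + a * c) →
    ds a b + ds a c = ds a (b + c + a * b * c)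
  D3 : ∀ a b c : R, IsUnit (1 + a * b * c) → ds a (b * c) = ds (a * b) c + ds (a * c) b
  /-- (D4): `⟨a,b⟩ = {1+ab, b}` when `b` and `1+ab` are units -/
  D4 : ∀ (a : R) (b u : Rˣ), (u : R) = 1 + a * b → ds a (b : R) = st u b
  /-- (D5): `⟨a,b⟩ = {−(1+a)/(1−b), (1+ab)/(1−b)}` when `1+a`, `1−b`, `1+ab` are units -/
  D5 : ∀ (a b : R) (x y : Rˣ), IsUnit (1 - b) → (x : R) * (1 - b) = -(1 + a) →
    (y : R) * (1 - b) = 1 + a * b → ds a b = st x y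
  st_mul_left : ∀ a a' b : Rˣ, st (a * a') b = st a b + st a' b
  st_mul_right : ∀ a b b' : Rˣ, st a (b * b') = st a b + st a b'
  steinberg : ∀ a b : Rˣ, (a : R) + (b : R) = 1 → st a b = 0

attribute [instance] DennisSteinK2.grp

/-- The unit filtration `U^i K₂(R)`: the subgroup generated by Steinberg symbols `{a,b}`
with `a` or `b` in `1 + pⁱR`. -/
def DennisSteinK2.U {R : Type} [CommRing R] (K : DennisSteinK2 R) (p i : ℕ) :
    AddSubgroup K.K2 :=
  AddSubgroup.closure
    {z | ∃ a b : Rˣ, ((∃ c : R, (a : R) = 1 + (p : R) ^ i * c) ∨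
      (∃ c : R, (b : R) = 1 + (p : R) ^ i * c)) ∧ z = K.st a b}

/-- The modified filtration `V^i K₂(R)`: it agrees with `U^i K₂(R)` except when `p = 2` and
`i = 2`, where the Dennis–Stein symbols `⟨2c,2⟩` are added. -/
def DennisSteinK2.V {R : Type} [CommRing R] (K : DennisSteinK2 R) (p i : ℕ) :
    AddSubgroup K.K2 :=
  if p = 2 ∧ i = 2 then
    K.U p 2 ⊔ AddSubgroup.closure {z | ∃ c : R, z = K.ds ((p : R) * c) (p : R)}
  else K.U p i
open Polynomial


lemma isUnit_of_isUnit_quot {R : Type} [CommRing R] {I : Ideal R}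
    (hI : I ≤ Ideal.jacobson ⊥) {x : R} (h : IsUnit (Ideal.Quotient.mk I x)) : IsUnit x := by
  obtain ⟨b, hb⟩ := h.exists_right_inv
  obtain ⟨y, hy⟩ := Ideal.Quotient.mk_surjective (I := I) b
  have h1 : (1 : R) - x * y ∈ I := by
    rw [← Ideal.Quotient.eq, map_one, map_mul, hy, hb]
  have h2 := (Ideal.mem_jacobson_bot.mp (hI h1)) (-1)
  have h3 : ((1 : R) - x * y) * (-1) + 1 = x * y := by ring
  rw [h3] at h2
  exact isUnit_of_mul_isUnit_left h2

theorem hensel_nonmonic_zero {R : Type} [CommRing R] (I : Ideal R) (hR : HenselianRing R I)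
    (g : R[X]) (h₀ : g.coeff 0 ∈ I) (h₁ : IsUnit (Ideal.Quotient.mk I (g.coeff 1))) :
    ∃ t : R, g.eval t = 0 ∧ t ∈ I := by
  set e := g.coeff 0 with he
  set c1 := g.coeff 1 with hc1
  rcases Nat.eq_zero_or_pos g.natDegree with hn | hn
  · have hc10 : c1 = 0 := by
      rw [hc1]
      exact Polynomial.coeff_eq_zero_of_natDegree_lt (by omega)
    rw [hc10, map_zero, isUnit_zero_iff] at h₁
    have hone : (1 : R) ∈ I := by
      have := Ideal.Quotient.eq.mp (show (Ideal.Quotient.mk I) 1 = (Ideal.Quotient.mk I) 0 by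
        rw [map_one, map_zero, ← h₁])
      simpa using this
    have h2 := (Ideal.mem_jacobson_bot.mp (hR.jac hone)) (-1)
    have h4 : (1 : R) * (-1) + 1 = 0 := by ring
    rw [h4] at h2
    have hsub : Subsingleton R := subsingleton_of_zero_eq_one (isUnit_zero_iff.mp h2)
    exact ⟨0, Subsingleton.elim _ _, I.zero_mem⟩
  · obtain ⟨m, hm⟩ : ∃ m, g.natDegree = m + 1 := ⟨g.natDegree - 1, by omega⟩
    set n := g.natDegree with hn'
    set Q : R[X] := X ^ n + ∑ j ∈ Finset.range n, C (g.coeff (j + 1) * e ^ j) * X ^ (n - (j + 1))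
      with hQ
    have hQm : Q.Monic := by
      apply Polynomial.monic_X_pow_add
      apply lt_of_le_of_lt (Polynomial.degree_sum_le _ _)
      rw [Finset.sup_lt_iff (by exact_mod_cast WithBot.bot_lt_coe n)]
      intro j hj
      apply lt_of_le_of_lt (Polynomial.degree_C_mul_X_pow_le _ _)
      rw [Finset.mem_range] at hj
      exact_mod_cast (by omega : n - (j+1) < n)
    have hQx : ∀ x : R, Q.eval x = x ^ n + ∑ j ∈ Finset.range n,
        (g.coeff (j + 1) * e ^ j) * x ^ (n - (j + 1)) := by
      intro x
      rw [hQ]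
      simp [Polynomial.eval_finset_sum]
    have key : ∀ x s : R, x * s = 1 → g.eval (e * s) = e * s ^ n * Q.eval x := by
      intro x s hxs
      have hsx : s * x = 1 := by rw [mul_comm]; exact hxs
      rw [Polynomial.eval_eq_sum_range (e * s), ← hn', Finset.sum_range_succ']
      rw [hQx x, mul_add, Finset.mul_sum]
      have h1 : e * s ^ n * x ^ n = e := by
        rw [mul_assoc, ← mul_pow, hsx, one_pow, mul_one]
      have h2 : ∀ j ∈ Finset.range n,
          e * s ^ n * ((g.coeff (j + 1) * e ^ j) * x ^ (n - (j + 1)))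
            = g.coeff (j + 1) * (e * s) ^ (j + 1) := by
        intro j hj
        rw [Finset.mem_range] at hj
        have hsplit : s ^ n = s ^ (j + 1) * s ^ (n - (j + 1)) := by
          rw [← pow_add]; congr 1; omega
        have hone : s ^ (n - (j+1)) * x ^ (n - (j+1)) = 1 := by
          rw [← mul_pow, hsx, one_pow]
        calc e * s ^ n * ((g.coeff (j + 1) * e ^ j) * x ^ (n - (j + 1)))
            = (g.coeff (j+1) * (e * s) ^ (j+1)) * (s ^ (n - (j+1)) * x ^ (n - (j+1))) := by
              rw [hsplit, mul_pow]; ring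
          _ = g.coeff (j + 1) * (e * s) ^ (j + 1) := by rw [hone, mul_one]
      rw [Finset.sum_congr rfl h2, h1, pow_zero, mul_one, ← he, add_comm]
    have hQe : Q.eval (-c1) ∈ I := by
      rw [hQx, hm, Finset.sum_range_succ']
      have hz : (-c1) ^ (m+1) + (g.coeff (0 + 1) * e ^ 0 * (-c1) ^ (m + 1 - (0 + 1))) = 0 := by
        simp [← hc1, pow_succ]
        ring
      have hmem : ∑ j ∈ Finset.range m,
          g.coeff (j + 1 + 1) * e ^ (j + 1) * (-c1) ^ (m + 1 - (j + 1 + 1)) ∈ I := by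
        apply Ideal.sum_mem
        intro j hj
        have h5 : e ^ (j + 1) = e * e ^ j := by rw [pow_succ, mul_comm]
        rw [h5]
        have h6 : g.coeff (j + 1 + 1) * (e * e ^ j) * (-c1) ^ (m + 1 - (j + 1 + 1))
            = e * (g.coeff (j + 1 + 1) * e ^ j * (-c1) ^ (m + 1 - (j + 1 + 1))) := by ring
        rw [h6]
        exact I.mul_mem_right _ h₀
      have h7 : (-c1) ^ (m+1) + (∑ j ∈ Finset.range m,
          g.coeff (j + 1 + 1) * e ^ (j + 1) * (-c1) ^ (m + 1 - (j + 1 + 1))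
          + g.coeff (0 + 1) * e ^ 0 * (-c1) ^ (m + 1 - (0 + 1)))
          = ((-c1) ^ (m+1) + g.coeff (0 + 1) * e ^ 0 * (-c1) ^ (m + 1 - (0 + 1)))
            + ∑ j ∈ Finset.range m,
          g.coeff (j + 1 + 1) * e ^ (j + 1) * (-c1) ^ (m + 1 - (j + 1 + 1)) := by ring
      rw [h7, hz, zero_add]
      exact hmem
    -- derivative is a unit mod I at -c1
    have hQd : Q.derivative.eval (-c1) = ((n:ℕ):R) * (-c1)^(n-1)
        + ∑ j ∈ Finset.range n, (g.coeff (j+1) * e ^ j) *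
          (((n - (j+1) : ℕ):R) * (-c1) ^ (n - (j+1) - 1)) := by
      rw [hQ, derivative_add, derivative_X_pow, derivative_sum]
      simp only [derivative_C_mul, derivative_X_pow]
      rw [eval_add, eval_finset_sum]
      simp [mul_assoc]
    have hD : ∀ k : ℕ, ((k+1 : ℕ):R) * (-c1)^k + c1 * (((k:ℕ):R) * (-c1)^(k-1)) = (-c1)^k := by
      intro k
      cases k with
      | zero => simp
      | succ k' =>
        have h8 : ((k'+1+1 : ℕ):R) * (-c1)^(k'+1) + c1 * (((k'+1:ℕ):R) * (-c1)^(k'+1-1))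
            = (-c1)^k' * ( ((k'+1+1:ℕ):R) * (-c1) + ((k'+1:ℕ):R) * c1 ) := by
          rw [pow_succ]; push_cast; ring
        rw [h8]
        have h9 : ((k'+1+1:ℕ):R) * (-c1) + ((k'+1:ℕ):R) * c1 = -c1 := by push_cast; ring
        rw [h9, ← pow_succ]
    have hsplit : Q.derivative.eval (-c1) = (-c1)^m
        + ∑ j ∈ Finset.range m, e * ((g.coeff (j+1+1) * e ^ j) *
            (((n - (j+1+1) : ℕ):R) * (-c1) ^ (n - (j+1+1) - 1))) := by
      rw [hQd, hm, Finset.sum_range_succ']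
      have h0term : (g.coeff (0+1) * e ^ 0) * (((m + 1 - (0+1) : ℕ):R) * (-c1) ^ (m + 1 - (0+1) - 1))
          = c1 * (((m:ℕ):R) * (-c1)^(m-1)) := by
        simp [← hc1]
      rw [h0term]
      have harr : ∀ A B S : R, A + (S + B) = (A + B) + S := by intros; ring
      rw [harr, show ((m+1:ℕ):R) * (-c1)^(m+1-1) = ((m+1:ℕ):R) * (-c1)^m by norm_num, hD m]
      congr 1
      apply Finset.sum_congr rfl
      intro j hj
      rw [pow_succ]
      ring
    have hQdu : IsUnit (Ideal.Quotient.mk I (Q.derivative.eval (-c1))) := by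
      rw [hsplit, map_add, map_sum]
      have hz : ∀ j ∈ Finset.range m, (Ideal.Quotient.mk I) (e * ((g.coeff (j+1+1) * e ^ j) *
            (((n - (j+1+1) : ℕ):R) * (-c1) ^ (n - (j+1+1) - 1)))) = 0 := by
        intro j _
        rw [Ideal.Quotient.eq_zero_iff_mem]
        exact I.mul_mem_right _ h₀
      rw [Finset.sum_congr rfl hz, Finset.sum_const, smul_zero, add_zero, map_pow, map_neg]
      exact (h₁.neg).pow m
    obtain ⟨x₀, hroot, hx₀⟩ := hR.is_henselian Q hQm (-c1) hQe hQdu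
    have hx₀u : IsUnit x₀ := by
      apply isUnit_of_isUnit_quot hR.jac
      rw [Ideal.Quotient.eq.mpr hx₀, map_neg]
      exact h₁.neg
    obtain ⟨u, hu⟩ := hx₀u
    refine ⟨e * ↑u⁻¹, ?_, I.mul_mem_right _ h₀⟩
    rw [key x₀ ↑u⁻¹ (by rw [← hu]; exact u.mul_inv)]
    rw [show Q.eval x₀ = 0 from hroot, mul_zero]

/-- Hensel's lemma for non-monic polynomials over a henselian pair. -/
theorem hensel_nonmonic {R : Type} [CommRing R] (I : Ideal R) (hR : HenselianRing R I)
    (f : R[X]) (a₀ : R) (h₀ : f.eval a₀ ∈ I)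
    (h₁ : IsUnit (Ideal.Quotient.mk I (f.derivative.eval a₀))) :
    ∃ a : R, f.eval a = 0 ∧ a - a₀ ∈ I := by
  set g : R[X] := f.comp (X + C a₀) with hg
  have hge : ∀ t : R, g.eval t = f.eval (t + a₀) := by
    intro t; rw [hg, eval_comp]; simp
  have hg0 : g.coeff 0 ∈ I := by
    rw [coeff_zero_eq_eval_zero, hge, zero_add]; exact h₀
  have hg1 : IsUnit (Ideal.Quotient.mk I (g.coeff 1)) := by
    have hc : g.coeff 1 = g.derivative.eval 0 := by
      rw [← coeff_zero_eq_eval_zero, coeff_derivative]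
      push_cast; ring
    have hd : g.derivative.eval 0 = f.derivative.eval a₀ := by
      rw [hg, derivative_comp]
      simp
    rw [hc, hd]; exact h₁
  obtain ⟨t, ht0, htI⟩ := hensel_nonmonic_zero I hR g hg0 hg1
  refine ⟨t + a₀, ?_, by simpa using htI⟩
  rw [← hge]; exact ht0


/-- coefficients of the auxiliary polynomial `((1+pX)^p - 1)/p²`. -/
def gcoeff (p k : ℕ) : ℕ := p.choose k * p ^ k / p ^ 2

/-- the auxiliary polynomial `G` with `p² G = (1+pX)^p - 1`. -/
noncomputable def Gpoly (p : ℕ) (R : Type) [CommRing R] : R[X] :=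
  ∑ k ∈ Finset.range (p + 1), C ((gcoeff p k : ℕ) : R) * X ^ k

section gcoeff
variable {p : ℕ} (hp : p.Prime)
include hp

lemma gcoeff_mul {k : ℕ} (hk : 1 ≤ k) : p ^ 2 * gcoeff p k = p.choose k * p ^ k := by
  apply Nat.mul_div_cancel'
  rcases eq_or_lt_of_le hk with h | h
  · rw [← h, Nat.choose_one_right, pow_one]
    exact ⟨1, by ring⟩
  · exact Dvd.dvd.mul_left (pow_dvd_pow p (by omega)) _

lemma gcoeff_zero : gcoeff p 0 = 0 := by
  have h2 := hp.two_le
  simp only [gcoeff, Nat.choose_zero_right, pow_zero, one_mul]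
  exact Nat.div_eq_of_lt (by nlinarith)

lemma gcoeff_one : gcoeff p 1 = 1 := by
  have h2 := hp.two_le
  have := gcoeff_mul hp (k := 1) le_rfl
  rw [Nat.choose_one_right, pow_one] at this
  have hp2 : p ^ 2 = p * p := sq p
  have : p ^ 2 * gcoeff p 1 = p ^ 2 * 1 := by rw [this, hp2]; ring
  exact Nat.eq_of_mul_eq_mul_left (by positivity) this

lemma gcoeff_eq {k : ℕ} (hk : 2 ≤ k) : gcoeff p k = p.choose k * p ^ (k - 2) := by
  have h2 := hp.two_le
  have h := gcoeff_mul hp (by omega : 1 ≤ k)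
  have hpow : p ^ k = p ^ (k - 2) * p ^ 2 := by rw [← pow_add]; congr 1; omega
  rw [hpow] at h
  have key : p ^ 2 * gcoeff p k = p ^ 2 * (p.choose k * p ^ (k - 2)) := by rw [h]; ring
  exact Nat.eq_of_mul_eq_mul_left (by positivity) key

lemma gcoeff_dvd_mul_self {k : ℕ} (hk : 2 ≤ k) : p ∣ k * gcoeff p k := by
  rcases eq_or_lt_of_le hk with h | h
  · subst h
    have h2 := hp.two_le
    have hγ2 : gcoeff p 2 = p.choose 2 := by rw [gcoeff_eq hp le_rfl]; simp
    have hdvd : 2 ∣ p * (p - 1) := by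
      rcases Nat.even_or_odd p with he | ho
      · exact Dvd.dvd.mul_right he.two_dvd _
      · exact Dvd.dvd.mul_left (Nat.Odd.sub_odd ho odd_one).two_dvd _
    have hc : 2 * p.choose 2 = p * (p - 1) := by
      rw [Nat.choose_two_right, Nat.mul_div_cancel' hdvd]
    rw [hγ2, hc]
    exact dvd_mul_right _ _
  · rw [gcoeff_eq hp hk]
    have : p ∣ p ^ (k - 2) := dvd_pow_self p (by omega)
    exact Dvd.dvd.mul_left (Dvd.dvd.mul_left this _) _

lemma gcoeff_dvd_of_odd (hodd : Odd p) {k : ℕ} (hk : 2 ≤ k) : p ∣ gcoeff p k := by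
  rw [gcoeff_eq hp hk]
  rcases Nat.lt_or_ge k 3 with h | h
  · have hk2 : k = 2 := by omega
    subst hk2
    simp only [Nat.sub_self, pow_zero, mul_one]
    apply hp.dvd_choose_self (by omega)
    have := hp.two_le
    rcases Nat.lt_or_ge 2 p with h' | h'
    · exact h'
    · interval_cases p
      · exact absurd hodd (by decide)
  · exact Dvd.dvd.mul_left (dvd_pow_self p (by omega)) _
end gcoeff

section Geval
variable {p : ℕ} (hp : p.Prime) {R : Type} [CommRing R]
include hp

lemma Gpoly_eval (t : R) :
    (Gpoly p R).eval t = ∑ k ∈ Finset.range (p + 1), ((gcoeff p k : ℕ) : R) * t ^ k := by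
  simp [Gpoly, Polynomial.eval_finset_sum]

lemma Gpoly_spec (t : R) :
    (p : R) ^ 2 * (Gpoly p R).eval t = (1 + (p : R) * t) ^ p - 1 := by
  rw [show (1 : R) + (p : R) * t = (p : R) * t + 1 from add_comm _ _, add_pow]
  rw [Gpoly_eval hp, Finset.mul_sum, eq_sub_iff_add_eq]
  rw [Finset.sum_range_succ' (fun k => (p:R)^2 * (((gcoeff p k : ℕ):R) * t ^ k)) p]
  rw [Finset.sum_range_succ' (fun k => ((p:R)*t)^k * 1 ^ (p - k) * ((p.choose k : ℕ):R)) p]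
  have h0 : (p:R)^2 * (((gcoeff p 0 : ℕ):R) * t ^ 0) = 0 := by
    rw [gcoeff_zero hp]; simp
  have h0' : ((p:R)*t)^0 * 1 ^ (p - 0) * ((p.choose 0 : ℕ):R) = 1 := by simp
  rw [h0, h0']
  have hterm : ∀ k ∈ Finset.range p,
      (p:R)^2 * (((gcoeff p (k+1) : ℕ):R) * t ^ (k+1))
        = ((p:R)*t)^(k+1) * 1 ^ (p - (k+1)) * ((p.choose (k+1) : ℕ):R) := by
    intro k _
    have h := gcoeff_mul hp (k := k+1) (by omega)
    have hc : ((p:R)^2) * ((gcoeff p (k+1) : ℕ) : R)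
        = ((p.choose (k+1) : ℕ) : R) * (p:R)^(k+1) := by
      have := congrArg (fun n : ℕ => (n : R)) h
      push_cast at this
      exact this
    calc (p:R)^2 * (((gcoeff p (k+1) : ℕ):R) * t ^ (k+1))
        = ((p:R)^2 * ((gcoeff p (k+1) : ℕ):R)) * t ^ (k+1) := by ring
      _ = ((p.choose (k+1) : ℕ):R) * (p:R)^(k+1) * t ^ (k+1) := by rw [hc]
      _ = ((p:R)*t)^(k+1) * 1 ^ (p - (k+1)) * ((p.choose (k+1) : ℕ):R) := by
          rw [mul_pow, one_pow]; ring
  rw [Finset.sum_congr rfl hterm]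
  ring

lemma Gpoly_deriv (t : R) : ∃ u : R, (Gpoly p R).derivative.eval t = 1 + (p : R) * u := by
  have h2 := hp.two_le
  have hde : (Gpoly p R).derivative.eval t
      = ∑ k ∈ Finset.range (p + 1), ((gcoeff p k : ℕ) : R) * (((k : ℕ):R) * t ^ (k - 1)) := by
    rw [Gpoly, derivative_sum]
    simp only [derivative_C_mul, derivative_X_pow]
    rw [eval_finset_sum]
    simp [mul_assoc]
  obtain ⟨q, hq⟩ : ∃ q, p + 1 = q + 1 + 1 := ⟨p - 1, by omega⟩
  rw [hde, hq, Finset.sum_range_succ', Finset.sum_range_succ']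
  have h0 : ((gcoeff p 0 : ℕ) : R) * (((0 : ℕ):R) * t ^ (0 - 1)) = 0 := by simp
  have h1 : ((gcoeff p (0 + 1) : ℕ) : R) * (((0 + 1 : ℕ):R) * t ^ (0 + 1 - 1)) = 1 := by
    rw [gcoeff_one hp]; simp
  rw [h0, h1]
  have hdvd : (p : R) ∣ ∑ k ∈ Finset.range q,
      ((gcoeff p (k + 1 + 1) : ℕ) : R) * (((k + 1 + 1 : ℕ):R) * t ^ (k + 1 + 1 - 1)) := by
    apply Finset.dvd_sum
    intro k _
    have hnd : p ∣ (k + 1 + 1) * gcoeff p (k + 1 + 1) :=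
      gcoeff_dvd_mul_self hp (by omega)
    have hrd : (p : R) ∣ (((k + 1 + 1) * gcoeff p (k + 1 + 1) : ℕ) : R) :=
      Nat.cast_dvd_cast hnd
    have : ((gcoeff p (k + 1 + 1) : ℕ) : R) * (((k + 1 + 1 : ℕ):R) * t ^ (k + 1 + 1 - 1))
        = (((k + 1 + 1) * gcoeff p (k + 1 + 1) : ℕ) : R) * t ^ (k + 1 + 1 - 1) := by
      push_cast; ring
    rw [this]
    exact Dvd.dvd.mul_right hrd _
  obtain ⟨u, hu⟩ := hdvd
  exact ⟨u, by rw [hu]; ring⟩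

lemma Gpoly_sub_self_of_odd (hodd : Odd p) (t : R) :
    ∃ u : R, (Gpoly p R).eval t = t + (p : R) * u := by
  have h2 := hp.two_le
  obtain ⟨q, hq⟩ : ∃ q, p + 1 = q + 1 + 1 := ⟨p - 1, by omega⟩
  rw [Gpoly_eval hp, hq, Finset.sum_range_succ', Finset.sum_range_succ']
  have h0 : ((gcoeff p 0 : ℕ) : R) * t ^ 0 = 0 := by rw [gcoeff_zero hp]; simp
  have h1 : ((gcoeff p (0 + 1) : ℕ) : R) * t ^ (0 + 1) = t := by rw [gcoeff_one hp]; simp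
  rw [h0, h1]
  have hdvd : (p : R) ∣ ∑ k ∈ Finset.range q,
      ((gcoeff p (k + 1 + 1) : ℕ) : R) * t ^ (k + 1 + 1) := by
    apply Finset.dvd_sum
    intro k _
    exact Dvd.dvd.mul_right (Nat.cast_dvd_cast (gcoeff_dvd_of_odd hp hodd (by omega))) _
  obtain ⟨u, hu⟩ := hdvd
  exact ⟨u, by rw [hu]; ring⟩
end Geval

lemma Gpoly_eval_two {R : Type} [CommRing R] (t : R) :
    (Gpoly 2 R).eval t = t + t ^ 2 := by
  have h0 : gcoeff 2 0 = 0 := by decide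
  have h1 : gcoeff 2 1 = 1 := by decide
  have h2 : gcoeff 2 2 = 1 := by decide
  rw [Gpoly_eval Nat.prime_two]
  rw [Finset.sum_range_succ, Finset.sum_range_succ, Finset.sum_range_succ, Finset.sum_range_zero]
  rw [h0, h1, h2]
  push_cast
  ring

/-- root of `Gpoly.eval = d` from an approximate root, via Hensel. -/
lemma Gpoly_root {p : ℕ} (hp : p.Prime) {R : Type} [CommRing R]
    (hhens : HenselianRing R (Ideal.span {(p : R)})) (d : R)
    (happrox : ∃ t₀ : R, (Gpoly p R).eval t₀ - d ∈ Ideal.span {(p : R)}) :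
    ∃ t : R, (Gpoly p R).eval t = d := by
  obtain ⟨t₀, ht₀⟩ := happrox
  set I := Ideal.span {(p : R)} with hI
  set f : R[X] := Gpoly p R - C d with hf
  have hfe : ∀ t : R, f.eval t = (Gpoly p R).eval t - d := by intro t; simp [hf]
  have hfd : f.derivative = (Gpoly p R).derivative := by
    rw [hf, derivative_sub, derivative_C, sub_zero]
  have h₀ : f.eval t₀ ∈ I := by rw [hfe]; exact ht₀
  have h₁ : IsUnit (Ideal.Quotient.mk I (f.derivative.eval t₀)) := by
    obtain ⟨u, hu⟩ := Gpoly_deriv hp (R := R) t₀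
    rw [hfd, hu, map_add, map_mul, map_one]
    have hpz : (Ideal.Quotient.mk I) ((p : R)) = 0 := by
      rw [Ideal.Quotient.eq_zero_iff_mem, hI]
      exact Ideal.mem_span_singleton_self _
    rw [hpz, zero_mul, add_zero]
    exact isUnit_one
  obtain ⟨a, ha, _⟩ := hensel_nonmonic I hhens f t₀ h₀ h₁
  refine ⟨a, ?_⟩
  have h := hfe a
  rw [ha] at h
  have h2 := h.symm
  rw [sub_eq_zero] at h2
  exact h2


section DSlayer

/-- the subgroup of `n`-divisible elements expressible as `n • y`. -/
def smulSubgroup (n : ℕ) (A : Type) [AddCommGroup A] : AddSubgroup A where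
  carrier := {x | ∃ y, x = n • y}
  zero_mem' := ⟨0, (smul_zero n).symm⟩
  add_mem' := by rintro a b ⟨x, rfl⟩ ⟨y, rfl⟩; exact ⟨x + y, (smul_add n x y).symm⟩
  neg_mem' := by rintro a ⟨x, rfl⟩; exact ⟨-x, (smul_neg n x).symm⟩

lemma mem_smulSubgroup_iff {n : ℕ} {A : Type} [AddCommGroup A] {x : A} :
    x ∈ smulSubgroup n A ↔ ∃ y, x = n • y := Iff.rfl

variable {p : ℕ} {R : Type} [CommRing R]

lemma unit_one_add_p_mul (hhens : HenselianRing R (Ideal.span {(p : R)})) (r : R) :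
    IsUnit (1 + (p : R) * r) := by
  have hmem : (p : R) * r ∈ Ideal.span {(p : R)} :=
    Ideal.mem_span_singleton.mpr (dvd_mul_right _ _)
  have h := (Ideal.mem_jacobson_bot.mp (hhens.jac hmem)) 1
  rw [mul_one] at h
  rw [add_comm]
  exact h

variable (K : DennisSteinK2 R)

lemma ds_zero (a : R) : K.ds a 0 = 0 := by
  have h : IsUnit (1 + a * 0) := by rw [mul_zero, add_zero]; exact isUnit_one
  have h2 := K.D2 a 0 0 h h
  have h3 : (0 : R) + 0 + a * 0 * 0 = 0 := by ring
  rw [h3] at h2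
  have h4 : K.ds a 0 + K.ds a 0 = K.ds a 0 + 0 := by rw [h2, add_zero]
  exact add_left_cancel h4

lemma st_one (a : Rˣ) : K.st a 1 = 0 := by
  have h := K.st_mul_right a 1 1
  rw [mul_one] at h
  exact (add_eq_left.mp h.symm)

lemma ds_neg {a b : R} (u : Rˣ) (hu : (u : R) = 1 + a * b) :
    K.ds a b = - K.ds a (-b * ↑u⁻¹) := by
  have h : IsUnit (1 + a * b) := hu ▸ u.isUnit
  set c : R := -b * ↑u⁻¹ with hc
  have hcu : c * (1 + a * b) = -b := by
    rw [hc, ← hu, mul_assoc, Units.inv_mul, mul_one]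
  have hsum : b + c + a * b * c = 0 := by
    have : b + c + a * b * c = b + c * (1 + a * b) := by ring
    rw [this, hcu]; ring
  have hcunit : IsUnit (1 + a * c) := by
    have : (1 + a * c) * (1 + a * b) = 1 := by
      have h5 : (1 + a * c) * (1 + a * b) = (1 + a * b) + a * (c * (1 + a * b)) := by ring
      rw [h5, hcu]; ring
    exact isUnit_iff_exists_inv.mpr ⟨_, this⟩
  have h2 := K.D2 a b c h hcunit
  rw [hsum, ds_zero] at h2
  exact eq_neg_of_add_eq_zero_left h2

/-- the iterate `c_n` with `1 + a c_n = (1+ab)^n`. -/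
def dsC (a b : R) : ℕ → R
  | 0 => 0
  | n + 1 => b + dsC a b n + a * b * dsC a b n

lemma dsC_spec (a b : R) (n : ℕ) : 1 + a * dsC a b n = (1 + a * b) ^ n := by
  induction n with
  | zero => simp [dsC]
  | succ n ih =>
    rw [pow_succ, ← ih, dsC]
    ring

lemma ds_nsmul {a b : R} (h : IsUnit (1 + a * b)) (n : ℕ) :
    n • K.ds a b = K.ds a (dsC a b n) := by
  induction n with
  | zero => rw [zero_smul, dsC, ds_zero]
  | succ n ih =>
    have hn : IsUnit (1 + a * dsC a b n) := by rw [dsC_spec]; exact h.pow n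
    have h2 := K.D2 a (dsC a b n) b hn h
    have h3 : dsC a b n + b + a * dsC a b n * b = dsC a b (n + 1) := by
      show _ = b + dsC a b n + a * b * dsC a b n
      ring
    rw [h3] at h2
    rw [succ_nsmul, ih, h2]

end DSlayer


section Core
variable {p : ℕ} {R : Type} [CommRing R] (K : DennisSteinK2 R)

lemma pow_unit_aux (hhens : HenselianRing R (Ideal.span {(p : R)})) {i : ℕ} (hi : 1 ≤ i)
    (x q : R) : IsUnit (1 + x * ((p : R) ^ i * q)) := by
  have hsplit : (p : R) ^ i = (p : R) * (p : R) ^ (i - 1) := by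
    rw [← pow_succ']
    congr 1
    omega
  have : 1 + x * ((p : R) ^ i * q) = 1 + (p : R) * ((p : R) ^ (i - 1) * q * x) := by
    rw [hsplit]; ring
  rw [this]
  exact unit_one_add_p_mul hhens _

/-- Core divisibility for Dennis–Stein symbols `⟨pⁱm₀, v⟩` with `v` a unit. -/
lemma core_unit (hp : p.Prime) (hhens : HenselianRing R (Ideal.span {(p : R)})) {i : ℕ} (hi : 2 ≤ i)
    (hsolv : ∀ d : R, ∃ t : R, (Gpoly p R).eval t = (p : R) ^ (i - 2) * d)
    (m₀ : R) (v : Rˣ) :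
    ∃ y : K.K2, K.ds ((p : R) ^ i * m₀) ↑v = p • y := by
  -- flip the symbol
  have hu1 : IsUnit (1 + ((p : R) ^ i * m₀) * ↑v) := by
    have : 1 + ((p : R) ^ i * m₀) * ↑v = 1 + ↑v * ((p : R) ^ i * m₀) := by ring
    rw [this]
    exact pow_unit_aux hhens (by omega) _ _
  have hflip := K.D1 ((p : R) ^ i * m₀) ↑v hu1
  set w : Rˣ := -v with hw
  have hwv : (w : R) = -↑v := rfl
  set s₀ : R := -m₀ with hs₀
  have hsm : -((p : R) ^ i * m₀) = (p : R) ^ i * s₀ := by rw [hs₀]; ring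
  -- solve for t
  obtain ⟨t, ht⟩ := hsolv (↑w * s₀)
  set b : R := ↑w⁻¹ * ((p : R) * t) with hb
  have hwb : (w : R) * b = (p : R) * t := by
    rw [hb, ← mul_assoc, Units.mul_inv, one_mul]
  have hub : IsUnit (1 + (w : R) * b) := by
    rw [hwb]; exact unit_one_add_p_mul hhens t
  have hiter := ds_nsmul K hub p
  -- identify dsC
  have hkey : (w : R) * dsC (↑w) b p = (w : R) * ((p : R) ^ i * s₀) := by
    have h1 : 1 + (w : R) * dsC (↑w) b p = (1 + (w : R) * b) ^ p := dsC_spec _ _ _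
    rw [hwb] at h1
    have h2 : ((p : R)) ^ 2 * (Gpoly p R).eval t = (1 + (p : R) * t) ^ p - 1 :=
      Gpoly_spec hp t
    have h3 : (1 + (p : R) * t) ^ p = 1 + (p : R) ^ 2 * (Gpoly p R).eval t := by
      linear_combination -h2
    rw [ht] at h3
    have h4 : (p : R) ^ 2 * (p : R) ^ (i - 2) = (p : R) ^ i := by
      rw [← pow_add]; congr 1; omega
    have h5 : (1 + (p : R) * t) ^ p = 1 + (w : R) * ((p : R) ^ i * s₀) := by
      rw [h3]
      linear_combination (↑w * s₀ : R) * h4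
    rw [h5] at h1
    exact add_left_cancel h1
  have hdsC : dsC (↑w : R) b p = (p : R) ^ i * s₀ := by
    have := hkey
    exact (Units.mul_right_inj w).mp this
  rw [hdsC] at hiter
  refine ⟨-(K.ds (↑w) b), ?_⟩
  rw [hflip, hsm, ← Units.val_neg, ← hw, ← hiter, smul_neg]

/-- Core divisibility for all Dennis–Stein symbols with first entry in `pⁱR`. -/
lemma core (hp : p.Prime) (hhens : HenselianRing R (Ideal.span {(p : R)}))
    (hgen : AddGenByUnits R) {i : ℕ} (hi : 2 ≤ i)
    (hsolv : ∀ d : R, ∃ t : R, (Gpoly p R).eval t = (p : R) ^ (i - 2) * d)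
    (m₀ r : R) :
    ∃ y : K.K2, K.ds ((p : R) ^ i * m₀) r = p • y := by
  set m : R := (p : R) ^ i * m₀ with hm
  have hmp : ∀ x : R, IsUnit (1 + m * x) := by
    intro x
    have : 1 + m * x = 1 + x * ((p : R) ^ i * m₀) := by rw [hm]; ring
    rw [this]
    exact pow_unit_aux hhens (by omega) _ _
  have hr : r ∈ AddSubgroup.closure {x : R | IsUnit x} := by
    rw [hgen]; trivial
  have main : ∀ (x : R), x ∈ AddSubgroup.closure {x : R | IsUnit x} →
      ∀ w : Rˣ, ∃ y : K.K2, K.ds m (x * ↑w) = p • y := by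
    intro x hx
    induction hx using AddSubgroup.closure_induction with
    | mem z hz =>
      intro w
      obtain ⟨u, hu⟩ := hz.mul w.isUnit
      have : K.ds m (z * ↑w) = K.ds m (↑u) := by rw [hu]
      rw [this]
      obtain ⟨y, hy⟩ := core_unit K hp hhens hi hsolv m₀ u
      exact ⟨y, by rw [← hm] at hy; exact hy⟩
    | zero =>
      intro w
      rw [zero_mul, ds_zero]
      exact ⟨0, by rw [smul_zero]⟩
    | add x' y' hx' hy' ihx ihy =>
      intro w
      have hu1 : IsUnit (1 + m * (x' * ↑w)) := hmp _
      set u1 := hu1.unit with hu1d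
      set y2 : R := y' * (↑w * ↑u1⁻¹) with hy2
      have hsum : x' * ↑w + y2 + m * (x' * ↑w) * y2 = (x' + y') * ↑w := by
        have e1 : x' * ↑w + y2 + m * (x' * ↑w) * y2 = x' * ↑w + y2 * (1 + m * (x' * ↑w)) := by
          ring
        rw [e1, ← IsUnit.unit_spec hu1, hy2]
        have e2 : y' * (↑w * ↑u1⁻¹) * ↑u1 = y' * ↑w * (↑u1⁻¹ * ↑u1) := by ring
        rw [e2, Units.inv_mul, mul_one]
        ring
      have hD2 := K.D2 m (x' * ↑w) y2 (hmp _) (hmp _)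
      rw [hsum] at hD2
      obtain ⟨a1, ha1⟩ := ihx w
      obtain ⟨a2, ha2⟩ := ihy (w * u1⁻¹)
      have hy2' : K.ds m y2 = p • a2 := by
        have : y2 = y' * ↑(w * u1⁻¹) := by rw [hy2, Units.val_mul]
        rw [this]
        exact ha2
      exact ⟨a1 + a2, by rw [← hD2, ha1, hy2', smul_add]⟩
    | neg x' hx' ihx =>
      intro w
      have hu : IsUnit (1 + m * (-x' * ↑w)) := hmp _
      set u := hu.unit with hud
      have hneg := ds_neg K u (IsUnit.unit_spec hu)
      have harg : -(-x' * ↑w) * ↑u⁻¹ = x' * ↑(w * u⁻¹) := by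
        rw [Units.val_mul]; ring
      rw [harg] at hneg
      obtain ⟨a, ha⟩ := ihx (w * u⁻¹)
      exact ⟨-a, by rw [hneg, ha, smul_neg]⟩
  obtain ⟨y, hy⟩ := main r hr 1
  rw [Units.val_one, mul_one] at hy
  exact ⟨y, hy⟩

end Core


section Gen
variable {p : ℕ} {R : Type} [CommRing R] (K : DennisSteinK2 R)

lemma Gpoly_eval_zero (hp : p.Prime) : (Gpoly p R).eval 0 = 0 := by
  rw [Gpoly_eval hp]
  apply Finset.sum_eq_zero
  intro k _
  cases k with
  | zero => rw [gcoeff_zero hp]; simp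
  | succ n => simp

lemma hsolv_three (hp : p.Prime) (hhens : HenselianRing R (Ideal.span {(p : R)})) :
    ∀ d : R, ∃ t : R, (Gpoly p R).eval t = (p : R) * d := by
  intro d
  apply Gpoly_root hp hhens
  refine ⟨0, ?_⟩
  rw [Gpoly_eval_zero hp, zero_sub]
  exact neg_mem (Ideal.mem_span_singleton.mpr (dvd_mul_right _ _))

lemma hsolv_odd (hp : p.Prime) (hodd : Odd p)
    (hhens : HenselianRing R (Ideal.span {(p : R)})) :
    ∀ d : R, ∃ t : R, (Gpoly p R).eval t = d := by
  intro d
  apply Gpoly_root hp hhens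
  obtain ⟨u, hu⟩ := Gpoly_sub_self_of_odd hp hodd (R := R) d
  refine ⟨d, ?_⟩
  rw [hu]
  have : d + (p : R) * u - d = (p : R) * u := by ring
  rw [this]
  exact Ideal.mem_span_singleton.mpr (dvd_mul_right _ _)

lemma hsolv_AS (hhens : HenselianRing R (Ideal.span {((2 : ℕ) : R)}))
    (hAS : ∀ x : R, ∃ y : R, y ^ 2 + y - x ∈ Ideal.span {(2 : R)}) :
    ∀ d : R, ∃ t : R, (Gpoly 2 R).eval t = d := by
  have hcast : ((2 : ℕ) : R) = (2 : R) := by norm_cast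
  intro d
  apply Gpoly_root Nat.prime_two hhens
  obtain ⟨y, hy⟩ := hAS d
  refine ⟨y, ?_⟩
  rw [Gpoly_eval_two]
  have : y + y ^ 2 - d = y ^ 2 + y - d := by ring
  rw [this, hcast]
  exact hy

/-- the `U^i` generators are `p`-divisible for `i ≥ 2` given solvability. -/
lemma st_gen (hp : p.Prime) (hhens : HenselianRing R (Ideal.span {(p : R)}))
    (hgen : AddGenByUnits R) {i : ℕ} (hi : 2 ≤ i)
    (hsolv : ∀ d : R, ∃ t : R, (Gpoly p R).eval t = (p : R) ^ (i - 2) * d)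
    (a b : Rˣ)
    (hab : (∃ c : R, (a : R) = 1 + (p : R) ^ i * c) ∨ (∃ c : R, (b : R) = 1 + (p : R) ^ i * c)) :
    ∃ y : K.K2, K.st a b = p • y := by
  rcases hab with ⟨c, hc⟩ | ⟨c, hc⟩
  · -- condition on a
    have hbb : (↑b⁻¹ : R) * ↑b = 1 := Units.inv_mul b
    have hx : (a : R) = 1 + ((p : R) ^ i * (c * ↑b⁻¹)) * ↑b := by
      rw [hc]
      linear_combination (-((p : R) ^ i * c) : R) * hbb
    have h4 := K.D4 ((p : R) ^ i * (c * ↑b⁻¹)) b a hx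
    obtain ⟨y, hy⟩ := core K hp hhens hgen hi hsolv (c * ↑b⁻¹) ↑b
    exact ⟨y, by rw [← h4, hy]⟩
  · -- condition on b
    set x : R := (↑a - 1) * ↑b⁻¹ with hxdef
    have hbb : (↑b⁻¹ : R) * ↑b = 1 := Units.inv_mul b
    have hx : (↑a : R) = 1 + x * ↑b := by
      rw [hxdef]
      linear_combination (-(↑a - 1 : R)) * hbb
    have hxb : x * ↑b = ↑a - 1 := by linear_combination -hx
    have h4 := K.D4 x b a hx
    -- 1 + x is a unit
    have haa : (↑a : R) * ↑a⁻¹ = 1 := Units.mul_inv a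
    have hsplit : (p : R) ^ i = (p : R) * (p : R) ^ (i - 1) := by
      rw [← pow_succ']; congr 1; omega
    have hprod : (1 + x) * ↑b = ↑a * (1 + (p : R) * ((p : R) ^ (i - 1) * c * ↑a⁻¹)) := by
      have e1 : (1 + x) * ↑b = ↑b + x * ↑b := by ring
      rw [e1, hxb, hc, hsplit]
      linear_combination (-((p : R) * ((p : R) ^ (i - 1) * c)) : R) * haa
    have hx1 : IsUnit (1 + x) := by
      apply isUnit_of_mul_isUnit_left (y := (↑b : R))
      rw [hprod]
      exact (a.isUnit).mul (unit_one_add_p_mul hhens _)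
    set u2 := hx1.unit with hu2def
    have hu2 : (↑u2 : R) = 1 + x := hx1.unit_spec
    set b₂ : R := (p : R) ^ i * (c * ↑u2⁻¹) with hb2
    have hD2 := K.D2 x 1 b₂ (by rw [mul_one]; exact hx1)
      (pow_unit_aux hhens (by omega) x (c * ↑u2⁻¹))
    have huu : (↑u2⁻¹ : R) * ↑u2 = 1 := Units.inv_mul u2
    have harg : (1 : R) + b₂ + x * 1 * b₂ = ↑b := by
      have e2 : (1 : R) + b₂ + x * 1 * b₂ = 1 + b₂ * (1 + x) := by ring
      rw [e2, ← hu2, hb2, hc]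
      linear_combination ((p : R) ^ i * c : R) * huu
    rw [harg] at hD2
    have hds1 : K.ds x 1 = 0 := by
      have h5 := K.D4 x 1 u2 (by rw [Units.val_one, mul_one, hu2])
      rw [Units.val_one] at h5
      rw [h5, st_one]
    have hst : K.st a b = K.ds x b₂ := by rw [← h4, ← hD2, hds1, zero_add]
    have hub2 : IsUnit (1 + x * b₂) := pow_unit_aux hhens (by omega) x _
    have hflip := K.D1 x b₂ hub2
    have hnb2 : -b₂ = (p : R) ^ i * (-(c * ↑u2⁻¹)) := by rw [hb2]; ring
    obtain ⟨y, hy⟩ := core K hp hhens hgen hi hsolv (-(c * ↑u2⁻¹)) (-x)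
    rw [← hnb2] at hy
    exact ⟨-y, by rw [hst, hflip, hy, smul_neg]⟩

/-- the extra `V²`-generators `⟨2c,2⟩` are `2`-divisible given Artin–Schreier surjectivity. -/
lemma extra_gen (hhens : HenselianRing R (Ideal.span {((2 : ℕ) : R)}))
    (hgen : AddGenByUnits R)
    (hAS : ∀ x : R, ∃ y : R, y ^ 2 + y - x ∈ Ideal.span {(2 : R)}) (c : R) :
    ∃ y : K.K2, K.ds (((2 : ℕ) : R) * c) ((2 : ℕ) : R) = 2 • y := by
  have hcast : ((2 : ℕ) : R) = (2 : R) := by norm_cast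
  rw [hcast]
  have unit2 : ∀ r : R, IsUnit (1 + (2 : R) * r) := by
    intro r
    have := unit_one_add_p_mul (p := 2) hhens r
    rwa [hcast] at this
  -- flip
  have h1 : IsUnit (1 + (2 : R) * c * 2) := by
    have e : (1 : R) + 2 * c * 2 = 1 + 2 * (2 * c) := by ring
    rw [e]; exact unit2 _
  have hflip := K.D1 ((2 : R) * c) 2 h1
  set s : R := -(2 * c) with hs
  -- Artin–Schreier solution
  obtain ⟨b, hb⟩ := hAS c
  obtain ⟨k, hk⟩ := Ideal.mem_span_singleton.mp hb
  -- 2 • ds (-2) b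
  have hub : IsUnit (1 + (-2 : R) * b) := by
    have e : (1 : R) + (-2) * b = 1 + 2 * (-b) := by ring
    rw [e]; exact unit2 _
  have hiter := ds_nsmul K hub 2
  have hc2 : dsC (-2 : R) b 2 = 2 * b - 2 * b ^ 2 := by
    show b + (b + 0 + (-2) * b * 0) + (-2) * b * (b + 0 + (-2) * b * 0) = 2 * b - 2 * b ^ 2
    ring
  rw [hc2] at hiter
  -- the correction term
  have hu4 : IsUnit (1 + (-2 : R) * s) := by
    have e : (1 : R) + (-2) * s = 1 + 2 * (2 * c) := by rw [hs]; ring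
    rw [e]; exact unit2 _
  set u4 := hu4.unit with hu4def
  have hu4s : (↑u4 : R) = 1 + (-2) * s := hu4.unit_spec
  set y'' : R := 4 * (b - k) * ↑u4⁻¹ with hy2
  have huu : (↑u4⁻¹ : R) * ↑u4 = 1 := Units.inv_mul u4
  have harg : s + y'' + (-2 : R) * s * y'' = 2 * b - 2 * b ^ 2 := by
    have e : s + y'' + (-2 : R) * s * y'' = s + y'' * (1 + (-2) * s) := by ring
    rw [e, ← hu4s, hy2]
    have e2 : 4 * (b - k) * ↑u4⁻¹ * ↑u4 = 4 * (b - k) * (↑u4⁻¹ * ↑u4) := by ring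
    rw [e2, huu, hs]
    linear_combination (2 : R) * hk
  have huy : IsUnit (1 + (-2 : R) * y'') := by
    have e : (1 : R) + (-2) * y'' = 1 + 2 * (-y'') := by ring
    rw [e]; exact unit2 _
  have hD2 := K.D2 (-2 : R) s y'' hu4 huy
  rw [harg] at hD2
  -- flip the correction term and apply `core`
  have hflip2 := K.D1 (-2 : R) y'' huy
  have hnb2 : -y'' = ((2 : ℕ) : R) ^ 2 * (-((b - k) * ↑u4⁻¹)) := by
    rw [hy2, hcast]; ring
  obtain ⟨y1, hy1⟩ := core (p := 2) K Nat.prime_two hhens hgen (i := 2) le_rfl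
    (fun d => by simpa using hsolv_AS hhens hAS d) (-((b - k) * ↑u4⁻¹)) (2 : R)
  rw [← hnb2] at hy1
  have hds2 : K.ds (-2 : R) y'' = -(2 • y1) := by
    rw [hflip2, show (-(-2 : R)) = (2 : R) by norm_num, hy1]
  refine ⟨-(K.ds (-2 : R) b + y1), ?_⟩
  rw [hflip]
  have hsum : K.ds (-2 : R) s = 2 • (K.ds (-2 : R) b) + 2 • y1 := by
    have e3 : K.ds (-2 : R) s = K.ds (-2 : R) (2 * b - 2 * b ^ 2) - K.ds (-2 : R) y'' := by
      rw [← hD2]; abel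
    rw [e3, ← hiter, hds2]
    abel
  rw [hsum, smul_neg, smul_add]
end Gen


/-!
## Statement 15

Let `R` be a `p`-henselian commutative ring additively generated by its units.  If `p` is odd
then `V² K₂(R) ⊆ p·K₂(R)`; in general `V³ K₂(R) ⊆ p·K₂(R)`; and if `p = 2` and the
Artin–Schreier map `x ↦ x² + x` is surjective on `R/2R`, then `V² K₂(R) ⊆ 2·K₂(R)`.
-/

theorem dennisStein_V_filtration_divisible
    (p : ℕ) (hp : p.Prime) (R : Type) [CommRing R]
    (hhens : HenselianRing R (Ideal.span {(p : R)}))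
    (hgen : AddGenByUnits R)
    (K : DennisSteinK2 R) :
    -- if `p` is odd then `V² K₂(R) ⊆ p·K₂(R)`:
    (Odd p → ∀ x ∈ K.V p 2, ∃ y : K.K2, x = p • y) ∧
    -- in general `V³ K₂(R) ⊆ p·K₂(R)`:
    (∀ x ∈ K.V p 3, ∃ y : K.K2, x = p • y) ∧
    -- if `p = 2` and the Artin–Schreier map is surjective on `R/2R` then `V² ⊆ 2·K₂(R)`:
    (p = 2 → (∀ x : R, ∃ y : R, y ^ 2 + y - x ∈ Ideal.span {(2 : R)}) →
      ∀ x ∈ K.V p 2, ∃ y : K.K2, x = 2 • y) := by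
  refine ⟨?_, ?_, ?_⟩
  · intro hodd x hx
    have hne : ¬(p = 2 ∧ 2 = 2) := by
      rintro ⟨h2, -⟩
      rw [h2] at hodd
      exact (by decide : ¬ Odd 2) hodd
    rw [DennisSteinK2.V, if_neg hne] at hx
    have hle : K.U p 2 ≤ smulSubgroup p K.K2 := by
      rw [DennisSteinK2.U, AddSubgroup.closure_le]
      rintro z ⟨a, b, hab, rfl⟩
      have hs : ∀ d : R, ∃ t : R, (Gpoly p R).eval t = (p : R) ^ (2 - 2) * d := by
        intro d
        obtain ⟨t, ht⟩ := hsolv_odd hp hodd hhens d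
        exact ⟨t, by rw [ht]; norm_num⟩
      exact st_gen K hp hhens hgen (le_refl 2) hs a b hab
    exact hle hx
  · intro x hx
    have hne : ¬(p = 2 ∧ 3 = 2) := by simp
    rw [DennisSteinK2.V, if_neg hne] at hx
    have hle : K.U p 3 ≤ smulSubgroup p K.K2 := by
      rw [DennisSteinK2.U, AddSubgroup.closure_le]
      rintro z ⟨a, b, hab, rfl⟩
      have hs : ∀ d : R, ∃ t : R, (Gpoly p R).eval t = (p : R) ^ (3 - 2) * d := by
        intro d
        obtain ⟨t, ht⟩ := hsolv_three hp hhens d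
        exact ⟨t, by rw [ht]; norm_num⟩
      exact st_gen K hp hhens hgen (by omega) hs a b hab
    exact hle hx
  · intro hp2 hAS x hx
    subst hp2
    rw [DennisSteinK2.V, if_pos ⟨rfl, rfl⟩] at hx
    have hle : (K.U 2 2 ⊔ AddSubgroup.closure
        {z | ∃ c : R, z = K.ds (((2 : ℕ) : R) * c) ((2 : ℕ) : R)}) ≤ smulSubgroup 2 K.K2 := by
      apply sup_le
      · rw [DennisSteinK2.U, AddSubgroup.closure_le]
        rintro z ⟨a, b, hab, rfl⟩
        have hs : ∀ d : R, ∃ t : R, (Gpoly 2 R).eval t = ((2 : ℕ) : R) ^ (2 - 2) * d := by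
          intro d
          obtain ⟨t, ht⟩ := hsolv_AS hhens hAS d
          exact ⟨t, by rw [ht]; norm_num⟩
        exact st_gen K Nat.prime_two hhens hgen (le_refl 2) hs a b hab
      · rw [AddSubgroup.closure_le]
        rintro z ⟨c, rfl⟩
        exact extra_gen K hhens hgen hAS c
    exact hle hx
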